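/- For every integer k ≥ 1 and every integer t, the value Q_{6k−1}(t) is divisible by 6. -/

import Mathlib

open Polynomial

lemma zmod6_q5 (s : ZMod 6) : s^5 - 4*s^3 + 3*s = 0 := by revert s; decide

/-- For every `k ≥ 1` and every integer `t`, `6` divides `Q_{6k-1}(t)`, where
`Q_n = Polynomial.dickson 2 1 n` over `ℤ`. -/
theorem six_dvd_dickson_eval (k : ℕ) (hk : 1 ≤ k) (t : ℤ) :
    (6 : ℤ) ∣ (dickson 2 (1 : ℤ) (6 * k - 1)).eval t := by
  set a : ℕ → ZMod 6 := fun n => (((dickson 2 (1 : ℤ) n).eval t : ℤ) : ZMod 6) with ha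
  set s : ZMod 6 := ((t : ℤ) : ZMod 6) with hs
  have hrec : ∀ n, a (n + 2) = s * a (n + 1) - a n := by
    intro n
    simp only [ha, dickson_add_two, eval_sub, eval_mul, eval_X, eval_one, eval_C]
    push_cast
    ring
  have a0 : a 0 = 1 := by simp [ha, dickson_zero]
  have a1 : a 1 = s := by simp [ha, hs, dickson_one]
  have key : ∀ n, a (n + 6) = (s^5 - 4*s^3 + 3*s) * a (n + 1) - (s^4 - 3*s^2 + 1) * a n := by
    intro n
    have h2 := hrec n
    have h3 := hrec (n+1)
    have h4 := hrec (n+2)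
    have h5 := hrec (n+3)
    have h6 := hrec (n+4)
    have : n + 4 + 2 = n + 6 := by omega
    rw [this] at h6
    have : n + 3 + 2 = n + 5 := by omega
    rw [this] at h5
    have : n + 2 + 2 = n + 4 := by omega
    rw [this] at h4
    have : n + 1 + 2 = n + 3 := by omega
    rw [this] at h3
    rw [h6, h5, h4, h3, h2]
    ring
  have main : ∀ m, 1 ≤ m → a (6 * m - 1) = 0 := by
    intro m hm
    induction m with
    | zero => omega
    | succ j ih =>
      rcases Nat.eq_or_lt_of_le hm with h | h
      · -- j = 0, so m = 1, 6*1-1 = 5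
        have hj : j = 0 := by omega
        subst hj
        have h2 := hrec 0
        have h3 := hrec 1
        have h4 := hrec 2
        have h5 := hrec 3
        norm_num at h2 h3 h4 h5
        rw [show 6 * 1 - 1 = 5 by norm_num, h5, h4, h3, h2, a1, a0]
        have := zmod6_q5 s
        linear_combination this
      · have hj : 1 ≤ j := by omega
        have ihz := ih hj
        have e1 : 6 * (j + 1) - 1 = (6 * j - 1) + 6 := by omega
        have e2 : (6 * j - 1) + 1 = 6 * j := by omega
        rw [e1, key, e2, ihz, zmod6_q5 s]
        ring
  have := main k hk
  rwa [ha, ZMod.intCast_zmod_eq_zero_iff_dvd] at this
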